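/- Let p and q̂ be probability mass functions on a finite type V of cardinality N with TV(p, q̂) ≤ δ, and let μ ∈ (0, 1). Define the smoothed distribution q^μ(x) := (1−μ)·q̂(x) + μ/N. Then: (a) q^μ(x) ≥ μ/N for all x; (b) TV(p, q^μ) ≤ δ + μ; (c) KL(p‖q^μ) ≤ 2·N·(δ + μ)²/μ; and (d) in particular, choosing μ = δ ∈ (0,1) gives KL(p‖q^δ) ≤ 8·N·δ, a bound linear in δ. -/

import Mathlib

open Finset

/-- Total variation distance between two pmfs on a finite type. -/
noncomputable def TV {V : Type*} [Fintype V] (p q : V → ℝ) : ℝ :=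
  (1 / 2) * ∑ x, |p x - q x|

/-- Kullback–Leibler divergence between two pmfs on a finite type. -/
noncomputable def KL {V : Type*} [Fintype V] (p q : V → ℝ) : ℝ :=
  ∑ x, p x * Real.log (p x / q x)

private lemma tv_nonneg' {V : Type*} [Fintype V] (p q : V → ℝ) : 0 ≤ TV p q := by
  unfold TV
  have : 0 ≤ ∑ x, |p x - q x| := Finset.sum_nonneg fun x _ => abs_nonneg _
  linarith

private lemma abs_le_tv' {V : Type*} [Fintype V] (p q : V → ℝ)
    (hpq : ∑ x, p x = ∑ x, q x) (x : V) : |p x - q x| ≤ TV p q := by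
  classical
  have h1 : ∑ y, (p y - q y) = 0 := by
    rw [Finset.sum_sub_distrib, hpq, sub_self]
  have h2 : ∑ y ∈ univ.erase x, (p y - q y) + (p x - q x) = ∑ y, (p y - q y) :=
    Finset.sum_erase_add _ _ (mem_univ x)
  have h3 : |p x - q x| ≤ ∑ y ∈ univ.erase x, |p y - q y| := by
    have he : p x - q x = -∑ y ∈ univ.erase x, (p y - q y) := by
      rw [h1] at h2; linarith
    rw [he, abs_neg]
    exact Finset.abs_sum_le_sum_abs _ _
  have h4 : ∑ y ∈ univ.erase x, |p y - q y| + |p x - q x| = ∑ y, |p y - q y| :=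
    Finset.sum_erase_add _ _ (mem_univ x)
  unfold TV
  linarith

private lemma kl_tv_aux {V : Type*} [Fintype V] [Nonempty V] (p qhat : V → ℝ) (δ μ : ℝ)
    (hp0 : ∀ x, 0 ≤ p x) (hp1 : ∑ x, p x = 1)
    (hq0 : ∀ x, 0 ≤ qhat x) (hq1 : ∑ x, qhat x = 1)
    (hTV : TV p qhat ≤ δ)
    (hμ : μ ∈ Set.Ioo (0 : ℝ) 1) :
    (∀ x, μ / (Fintype.card V : ℝ) ≤ (1 - μ) * qhat x + μ / (Fintype.card V : ℝ)) ∧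
    TV p (fun x => (1 - μ) * qhat x + μ / (Fintype.card V : ℝ)) ≤ δ + μ ∧
    KL p (fun x => (1 - μ) * qhat x + μ / (Fintype.card V : ℝ)) ≤
      2 * (Fintype.card V : ℝ) * (δ + μ) ^ 2 / μ := by
  obtain ⟨hμ0, hμ1⟩ := hμ
  set N : ℝ := (Fintype.card V : ℝ) with hNdef
  have hN0 : 0 < N := by
    rw [hNdef]
    exact_mod_cast Fintype.card_pos

  set q : V → ℝ := fun x => (1 - μ) * qhat x + μ / N with hqdef
  have floor : ∀ x, μ / N ≤ q x := by
    intro x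
    have h0 : 0 ≤ (1 - μ) * qhat x := mul_nonneg (by linarith) (hq0 x)
    simp only [hqdef]
    linarith
  have hqpos : ∀ x, 0 < q x := fun x => lt_of_lt_of_le (by positivity) (floor x)
  have hqsum : ∑ x, q x = 1 := by
    have h : ∑ x, q x = (1 - μ) * ∑ x, qhat x + (Fintype.card V : ℝ) * (μ / N) := by
      simp only [hqdef]
      rw [Finset.sum_add_distrib, ← Finset.mul_sum, Finset.sum_const, card_univ,
        nsmul_eq_mul]
    rw [h, hq1, mul_one, ← hNdef]
    field_simp
    ring
  have hδ0 : 0 ≤ δ := le_trans (tv_nonneg' p qhat) hTV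
  have hε0 : 0 ≤ δ + μ := by linarith
  -- TV bound
  have tvb : TV p q ≤ δ + μ := by
    have habs : ∀ x, |p x - q x| ≤ |p x - qhat x| + (μ * qhat x + μ / N) := by
      intro x
      have h1 : p x - q x = (p x - qhat x) + (μ * qhat x - μ / N) := by
        simp only [hqdef]; ring
      have h2 : 0 ≤ μ * qhat x := mul_nonneg hμ0.le (hq0 x)
      have h3 : 0 ≤ μ / N := by positivity
      have h4 : |μ * qhat x - μ / N| ≤ μ * qhat x + μ / N :=
        abs_le.mpr ⟨by linarith, by linarith⟩
      calc |p x - q x| = |(p x - qhat x) + (μ * qhat x - μ / N)| := by rw [h1]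
        _ ≤ |p x - qhat x| + |μ * qhat x - μ / N| := abs_add_le _ _
        _ ≤ |p x - qhat x| + (μ * qhat x + μ / N) := by linarith
    have hs : ∑ x, |p x - q x| ≤ ∑ x, (|p x - qhat x| + (μ * qhat x + μ / N)) :=
      Finset.sum_le_sum fun x _ => habs x
    have hs2 : ∑ x, (|p x - qhat x| + (μ * qhat x + μ / N))
        = (∑ x, |p x - qhat x|) + (μ * 1 + (Fintype.card V : ℝ) * (μ / N)) := by
      rw [Finset.sum_add_distrib, Finset.sum_add_distrib, ← Finset.mul_sum, hq1,
        Finset.sum_const, card_univ, nsmul_eq_mul]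
    have hNμ : (Fintype.card V : ℝ) * (μ / N) = μ := by
      rw [← hNdef]; field_simp
    unfold TV at hTV ⊢
    rw [hs2, hNμ] at hs
    linarith
  -- KL bound
  have hpsumq : ∑ x, p x = ∑ x, q x := by rw [hp1, hqsum]
  have hzero : ∑ x, (p x - q x) = 0 := by
    rw [Finset.sum_sub_distrib, hp1, hqsum]; ring
  have step1 : KL p q ≤ ∑ x, (p x - q x) ^ 2 / q x := by
    have hterm : ∀ x, p x * Real.log (p x / q x) ≤ (p x - q x) ^ 2 / q x + (p x - q x) := by
      intro x
      have hqx := hqpos x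
      rcases eq_or_lt_of_le (hp0 x) with h | h
      · rw [← h]
        have hRHS : (0 - q x) ^ 2 / q x + (0 - q x) = 0 := by
          field_simp
          ring
        rw [zero_mul, hRHS]
      · have hlog : Real.log (p x / q x) ≤ p x / q x - 1 :=
          Real.log_le_sub_one_of_pos (div_pos h hqx)
        have h2 : p x * Real.log (p x / q x) ≤ p x * (p x / q x - 1) :=
          mul_le_mul_of_nonneg_left hlog h.le
        have h3 : p x * (p x / q x - 1) = (p x - q x) ^ 2 / q x + (p x - q x) := by
          field_simp
          ring
        linarith
    unfold KL
    calc ∑ x, p x * Real.log (p x / q x)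
        ≤ ∑ x, ((p x - q x) ^ 2 / q x + (p x - q x)) :=
          Finset.sum_le_sum fun x _ => hterm x
      _ = ∑ x, (p x - q x) ^ 2 / q x := by
          rw [Finset.sum_add_distrib, hzero, add_zero]
  have step2 : ∑ x, (p x - q x) ^ 2 / q x ≤ ∑ x, (p x - q x) ^ 2 * (N / μ) := by
    apply Finset.sum_le_sum
    intro x _
    rw [div_eq_mul_inv]
    apply mul_le_mul_of_nonneg_left _ (sq_nonneg _)
    have h1 : (q x)⁻¹ ≤ (μ / N)⁻¹ := by
      apply inv_anti₀ (by positivity) (floor x)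
    rwa [inv_div] at h1
  have step3 : ∑ x, (p x - q x) ^ 2 ≤ 2 * (δ + μ) ^ 2 := by
    have h1 : ∀ x, (p x - q x) ^ 2 ≤ (δ + μ) * |p x - q x| := by
      intro x
      have h2 : |p x - q x| ≤ δ + μ := (abs_le_tv' p q hpsumq x).trans tvb
      calc (p x - q x) ^ 2 = |p x - q x| * |p x - q x| := by
            rw [← sq_abs, sq]
        _ ≤ (δ + μ) * |p x - q x| := mul_le_mul_of_nonneg_right h2 (abs_nonneg _)
    have h2 : ∑ x, |p x - q x| ≤ 2 * (δ + μ) := by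
      unfold TV at tvb; linarith
    calc ∑ x, (p x - q x) ^ 2 ≤ ∑ x, (δ + μ) * |p x - q x| :=
          Finset.sum_le_sum fun x _ => h1 x
      _ = (δ + μ) * ∑ x, |p x - q x| := by rw [Finset.mul_sum]
      _ ≤ (δ + μ) * (2 * (δ + μ)) := mul_le_mul_of_nonneg_left h2 hε0
      _ = 2 * (δ + μ) ^ 2 := by ring
  have klb : KL p q ≤ 2 * N * (δ + μ) ^ 2 / μ := by
    calc KL p q ≤ ∑ x, (p x - q x) ^ 2 / q x := step1
      _ ≤ ∑ x, (p x - q x) ^ 2 * (N / μ) := step2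
      _ = (∑ x, (p x - q x) ^ 2) * (N / μ) := by rw [← Finset.sum_mul]
      _ ≤ (2 * (δ + μ) ^ 2) * (N / μ) :=
          mul_le_mul_of_nonneg_right step3 (by positivity)
      _ = 2 * N * (δ + μ) ^ 2 / μ := by ring
  exact ⟨floor, tvb, klb⟩

/-- KL–TV conversion, smoothed-decoder form: with `q^μ := (1−μ)·q̂ + μ/N`,
(a) `q^μ` has floor `μ/N`; (b) `TV(p,q^μ) ≤ δ + μ`; (c) `KL(p‖q^μ) ≤ 2N(δ+μ)²/μ`;
(d) the choice `μ = δ ∈ (0,1)` gives the linear bound `KL(p‖q^δ) ≤ 8Nδ`. -/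
theorem kl_tv_smoothed {V : Type*} [Fintype V] [Nonempty V] (p qhat : V → ℝ) (δ μ : ℝ)
    (hp0 : ∀ x, 0 ≤ p x) (hp1 : ∑ x, p x = 1)
    (hq0 : ∀ x, 0 ≤ qhat x) (hq1 : ∑ x, qhat x = 1)
    (hTV : TV p qhat ≤ δ)
    (hμ : μ ∈ Set.Ioo (0 : ℝ) 1) :
    (∀ x, μ / (Fintype.card V : ℝ) ≤ (1 - μ) * qhat x + μ / (Fintype.card V : ℝ)) ∧
    TV p (fun x => (1 - μ) * qhat x + μ / (Fintype.card V : ℝ)) ≤ δ + μ ∧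
    KL p (fun x => (1 - μ) * qhat x + μ / (Fintype.card V : ℝ)) ≤
      2 * (Fintype.card V : ℝ) * (δ + μ) ^ 2 / μ ∧
    (δ ∈ Set.Ioo (0 : ℝ) 1 →
      KL p (fun x => (1 - δ) * qhat x + δ / (Fintype.card V : ℝ)) ≤
        8 * (Fintype.card V : ℝ) * δ) := by
  obtain ⟨h1, h2, h3⟩ := kl_tv_aux p qhat δ μ hp0 hp1 hq0 hq1 hTV hμ
  refine ⟨h1, h2, h3, fun hδ => ?_⟩
  have h4 := (kl_tv_aux p qhat δ δ hp0 hp1 hq0 hq1 hTV hδ).2.2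
  have hδ0 : (0 : ℝ) < δ := hδ.1
  have heq : 2 * (Fintype.card V : ℝ) * (δ + δ) ^ 2 / δ = 8 * (Fintype.card V : ℝ) * δ := by
    field_simp
    ring
  linarith [h4, heq.le, heq.ge]
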